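/- arXiv:1607.02847 — 3 statements merged into one kernel-verified Lean document; each statement's English description precedes it below -/
import Mathlib

section
/- Let C be a unital C*-algebra, ω a state on C, and u ∈ C a partial isometry with p := u u* and q := u* u. Then ‖ω(· u*) − ω(· q)‖² ≤ 4 (ω(p) + ω(q) − ω(u) − ω(u*)), where the norm is the dual norm on the space of bounded linear functionals on C. -/
open scoped ComplexOrder

section Aux

variable {A : Type*} [CStarAlgebra A] [PartialOrder A] [StarOrderedRing A]
  (ω : A →L[ℂ] ℂ) (hω1 : ω 1 = 1) (hωpos : ∀ x : A, 0 ≤ ω (star x * x))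

include hωpos in
theorem my_omega_nonneg {a : A} (ha : 0 ≤ a) : 0 ≤ ω a := by
  rw [StarOrderedRing.nonneg_iff] at ha
  induction ha using AddSubmonoid.closure_induction with
  | mem x hx => obtain ⟨s, rfl⟩ := hx; exact hωpos s
  | zero => simp
  | add x y _ _ hx hy => rw [map_add]; exact add_nonneg hx hy

include hω1 in
theorem my_omega_algebraMap (r : ℝ) : ω (algebraMap ℝ A r) = (r : ℂ) := by
  rw [IsScalarTower.algebraMap_apply ℝ ℂ A, Algebra.algebraMap_eq_smul_one, map_smul, hω1,
    smul_eq_mul, mul_one]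
  rfl

include hω1 hωpos in
theorem my_omega_real_of_sa {a : A} (ha : IsSelfAdjoint a) : (ω a).im = 0 := by
  have h1 : (0 : A) ≤ a + algebraMap ℝ A ‖a‖ := by
    have h := IsSelfAdjoint.neg_algebraMap_norm_le_self ha
    simpa using add_le_add_left h (algebraMap ℝ A ‖a‖)
  have h2 := my_omega_nonneg ω hωpos h1
  rw [map_add, my_omega_algebraMap ω hω1] at h2
  rw [Complex.le_def] at h2
  simpa using h2.2.symm

include hω1 hωpos in
theorem my_omega_star (a : A) : ω (star a) = starRingEnd ℂ (ω a) := by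
  have hb : (ω (a + star a)).im = 0 :=
    my_omega_real_of_sa ω hω1 hωpos (by simpa using IsSelfAdjoint.add_star_self a)
  have hc : (ω (Complex.I • (a - star a))).im = 0 := by
    refine my_omega_real_of_sa ω hω1 hωpos ?_
    rw [IsSelfAdjoint, star_smul, star_sub, star_star]
    simp only [RCLike.star_def, Complex.conj_I, neg_smul, smul_sub]
    abel
  rw [map_add] at hb
  rw [map_smul, map_sub] at hc
  rw [Complex.ext_iff]
  constructor
  · have := hc
    simp only [Complex.real_smul, smul_eq_mul, Complex.mul_im, Complex.I_re, Complex.I_im,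
      Complex.sub_re, Complex.sub_im] at this
    simp only [Complex.conj_re]
    linarith
  · simp only [Complex.add_im] at hb
    simp only [Complex.conj_im]
    linarith

end Aux

noncomputable def myCore {A : Type*} [CStarAlgebra A] [PartialOrder A] [StarOrderedRing A]
    (ω : A →L[ℂ] ℂ) (hω1 : ω 1 = 1) (hωpos : ∀ x : A, 0 ≤ ω (star x * x)) :
    PreInnerProductSpace.Core ℂ A where
  inner x y := ω (star x * y)
  conj_inner_symm x y := by
    show starRingEnd ℂ (ω (star y * x)) = ω (star x * y)
    rw [← my_omega_star ω hω1 hωpos (star y * x)]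
    simp [star_mul]
  re_inner_nonneg x := by
    have h := hωpos x
    rw [Complex.le_def] at h
    simpa using h.1
  add_left x y z := by simp [star_add, add_mul]
  smul_left x y r := by
    simp [star_smul, smul_mul_assoc, RCLike.star_def, smul_eq_mul]

theorem my_cs {A : Type*} [CStarAlgebra A] [PartialOrder A] [StarOrderedRing A]
    (ω : A →L[ℂ] ℂ) (hω1 : ω 1 = 1) (hωpos : ∀ x : A, 0 ≤ ω (star x * x)) (x y : A) :
    ‖ω (star x * y)‖ ^ 2 ≤ (ω (star x * x)).re * (ω (star y * y)).re := by
  letI c : PreInnerProductSpace.Core ℂ A := myCore ω hω1 hωpos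
  letI : Inner ℂ A := InnerProductSpace.Core.toPreInner'
  have h := InnerProductSpace.Core.inner_mul_inner_self_le (𝕜 := ℂ) (F := A) x y
  have e1 : (inner ℂ x y : ℂ) = ω (star x * y) := rfl
  have e2 : (inner ℂ y x : ℂ) = ω (star y * x) := rfl
  have e3 : (inner ℂ x x : ℂ) = ω (star x * x) := rfl
  have e4 : (inner ℂ y y : ℂ) = ω (star y * y) := rfl
  rw [e1, e2, e3, e4] at h
  have hcj : ω (star y * x) = starRingEnd ℂ (ω (star x * y)) := by
    rw [← my_omega_star ω hω1 hωpos (star x * y)]; simp [star_mul]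
  rw [hcj, RCLike.norm_conj] at h
  simpa [RCLike.re_to_complex, sq] using h

/-- For a state `ω` on a unital C*-algebra `C` and a partial isometry `u` with `p = u u*`,
`q = u* u`, one has `‖ω(· u*) − ω(· q)‖² ≤ 4 (ω(p) + ω(q) − ω(u) − ω(u*))`. -/
theorem state_polar_inequality_right
    {C : Type*} [NormedRing C] [StarRing C] [CStarRing C] [NormedAlgebra ℂ C]
    [CompleteSpace C] [StarModule ℂ C]
    (ω : C →L[ℂ] ℂ) (hω1 : ω 1 = 1) (hωpos : ∀ x : C, 0 ≤ ω (star x * x))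
    (u : C) (hu : u * star u * u = u) :
    ‖ω.comp ((ContinuousLinearMap.mul ℂ C).flip (star u))
        - ω.comp ((ContinuousLinearMap.mul ℂ C).flip (star u * u))‖ ^ 2
      ≤ 4 * (ω (u * star u) + ω (star u * u) - ω u - ω (star u)).re := by
  letI : CStarAlgebra C := {}
  letI : PartialOrder C := CStarAlgebra.spectralOrder C
  letI : StarOrderedRing C := CStarAlgebra.spectralOrderedRing C
  set a : C := star u - star u * u with ha
  have h1 : u * (star u * u) = u := by rw [← mul_assoc, hu]
  have h2 : (star u * u) * star u = star u := by
    have h := congrArg star h1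
    simpa [star_mul, mul_assoc] using h
  have h3 : (star u * u) * (star u * u) = star u * u := by
    rw [mul_assoc (star u) u, h1]
  have hstar_a : star a = u - star u * u := by
    simp [ha, star_sub, star_mul, mul_assoc]
  have key : star a * a = u * star u + star u * u - u - star u := by
    rw [hstar_a, ha, sub_mul, mul_sub, mul_sub, h1, h2, h3]
    abel
  have hkeyω : (ω (star a * a)).re
      = (ω (u * star u) + ω (star u * u) - ω u - ω (star u)).re := by
    rw [key]; simp [map_sub, map_add]
  set M : ℝ := (ω (star a * a)).re with hM
  have hM0 : 0 ≤ M := by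
    have h := hωpos a
    rw [Complex.le_def] at h
    simpa [hM] using h.1
  -- the functional applied to x is ω (x * a)
  set F := ω.comp ((ContinuousLinearMap.mul ℂ C).flip (star u))
      - ω.comp ((ContinuousLinearMap.mul ℂ C).flip (star u * u)) with hF
  have hFx : ∀ x : C, F x = ω (x * a) := by
    intro x
    simp [hF, ha, mul_sub, map_sub]
  -- bound each value
  have hbound : ∀ x : C, ‖F x‖ ≤ Real.sqrt M * ‖x‖ := by
    intro x
    have cs := my_cs ω hω1 hωpos (star x) a
    rw [star_star] at cs
    have hxx : (ω (x * star x)).re ≤ ‖x‖ ^ 2 := by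
      have hle : x * star x ≤ algebraMap ℝ C (‖x‖ ^ 2) :=
        CStarAlgebra.mul_star_le_algebraMap_norm_sq
      have hpos : (0 : C) ≤ algebraMap ℝ C (‖x‖ ^ 2) - x * star x := by
        simpa using add_le_add_right hle (-(x * star x))
      have h := my_omega_nonneg ω hωpos hpos
      rw [map_sub, my_omega_algebraMap ω hω1, Complex.le_def] at h
      simp only [Complex.sub_re, Complex.zero_re, Complex.ofReal_re] at h
      linarith [h.1]
    have : ‖ω (x * a)‖ ^ 2 ≤ ‖x‖ ^ 2 * M := by
      calc ‖ω (x * a)‖ ^ 2 ≤ (ω (x * star x)).re * M := cs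
        _ ≤ ‖x‖ ^ 2 * M := by
            exact mul_le_mul_of_nonneg_right hxx hM0
    rw [hFx x]
    have h' := Real.sqrt_le_sqrt this
    rw [Real.sqrt_sq (norm_nonneg _), Real.sqrt_mul (sq_nonneg _),
      Real.sqrt_sq (norm_nonneg _)] at h'
    linarith [h']
  have hnorm : ‖F‖ ≤ Real.sqrt M :=
    F.opNorm_le_bound (Real.sqrt_nonneg M) hbound
  have : ‖F‖ ^ 2 ≤ M := by
    calc ‖F‖ ^ 2 ≤ Real.sqrt M ^ 2 := by
          exact pow_le_pow_left₀ (norm_nonneg F) hnorm 2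
      _ = M := Real.sq_sqrt hM0
  rw [← hkeyω]
  linarith
end

section
/- Let C be a unital C*-algebra, ω a state on C, and u ∈ C a partial isometry with p := u u* and q := u* u. Then ‖ω(u · u*) − ω(q · q)‖² ≤ 4 (ω(p) + ω(q) − ω(u) − ω(u*)). -/
open scoped ComplexOrder

lemma aux_herm {C : Type*} [NormedRing C] [StarRing C] [NormedAlgebra ℂ C] [StarModule ℂ C]
    (ω : C →L[ℂ] ℂ) (hωpos : ∀ x : C, 0 ≤ ω (star x * x)) (a b : C) :
    (starRingEnd ℂ) (ω (star b * a)) = ω (star a * b) := by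
  have him : ∀ c : C, (ω (star c * c)).im = 0 := fun c => (Complex.nonneg_iff.mp (hωpos c)).2.symm
  have s1 := him (a + b)
  have s2 := him (a + Complex.I • b)
  rw [show star (a + b) * (a + b) = star a * a + (star a * b + (star b * a + star b * b)) by
    simp [star_add, add_mul, mul_add]; abel] at s1
  rw [show star (a + Complex.I • b) * (a + Complex.I • b)
      = star a * a + (Complex.I • (star a * b) + ((-Complex.I) • (star b * a) + star b * b)) by
    simp [star_add, star_smul, add_mul, mul_add, smul_mul_assoc, mul_smul_comm, smul_smul,
      Complex.conj_I]; abel] at s2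
  simp only [map_add, map_smul, Complex.add_im, smul_eq_mul, Complex.mul_im, Complex.neg_re,
    Complex.I_re, Complex.I_im, Complex.neg_im, him a, him b] at s1 s2
  apply Complex.ext <;> simp [Complex.conj_re, Complex.conj_im] <;> linarith

set_option maxHeartbeats 1000000 in
lemma aux_cs {C : Type*} [NormedRing C] [StarRing C] [NormedAlgebra ℂ C] [StarModule ℂ C]
    (ω : C →L[ℂ] ℂ) (hωpos : ∀ x : C, 0 ≤ ω (star x * x)) (a b : C) :
    ‖ω (star a * b)‖ ^ 2 ≤ (ω (star a * a)).re * (ω (star b * b)).re := by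
  letI core : PreInnerProductSpace.Core ℂ C :=
    { inner := fun x y => ω (star x * y)
      conj_inner_symm := fun x y => aux_herm ω hωpos x y
      re_inner_nonneg := fun x => (Complex.nonneg_iff.mp (hωpos x)).1
      add_left := fun x y z => by simp [star_add, add_mul]
      smul_left := fun x y r => by simp [star_smul, smul_mul_assoc] }
  have h := @InnerProductSpace.Core.inner_mul_inner_self_le ℂ C _ _ _ core a b
  have e1 : @inner ℂ C (InnerProductSpace.Core.toPreInner') a b = ω (star a * b) := rfl
  have e2 : @inner ℂ C (InnerProductSpace.Core.toPreInner') b a = ω (star b * a) := rfl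
  have e3 : @inner ℂ C (InnerProductSpace.Core.toPreInner') a a = ω (star a * a) := rfl
  have e4 : @inner ℂ C (InnerProductSpace.Core.toPreInner') b b = ω (star b * b) := rfl
  rw [e1, e2, e3, e4] at h
  have hsym : ‖ω (star b * a)‖ = ‖ω (star a * b)‖ := by
    rw [← aux_herm ω hωpos a b, starRingEnd_apply, norm_star]
  rw [hsym] at h
  simpa [sq, RCLike.re_to_complex] using h

lemma aux_nonneg {C : Type*} [NormedRing C] [StarRing C] [NormedAlgebra ℂ C] [StarModule ℂ C]
    (ω : C →L[ℂ] ℂ) (hωpos : ∀ x : C, 0 ≤ ω (star x * x)) :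
    ∀ s ∈ AddSubmonoid.closure (Set.range fun s : C => star s * s), 0 ≤ (ω s).re := by
  intro s hs
  induction hs using AddSubmonoid.closure_induction with
  | mem x hx => obtain ⟨c, rfl⟩ := hx; exact (Complex.nonneg_iff.mp (hωpos c)).1
  | zero => simp
  | add x y hx hy ihx ihy => simp only [map_add, Complex.add_re]; linarith

lemma aux_mono {C : Type*} [NormedRing C] [StarRing C] [NormedAlgebra ℂ C] [StarModule ℂ C]
    [PartialOrder C] [StarOrderedRing C]
    (ω : C →L[ℂ] ℂ) (hωpos : ∀ x : C, 0 ≤ ω (star x * x)) {a b : C} (hab : a ≤ b) :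
    (ω a).re ≤ (ω b).re := by
  obtain ⟨s, hs, rfl⟩ := (StarOrderedRing.le_iff _ _).mp hab
  have h0 := aux_nonneg ω hωpos s hs
  simp only [map_add, Complex.add_re]; linarith

/-- For a state `ω` on a unital C*-algebra `C` and a partial isometry `u` with `p = u u*`,
`q = u* u`, one has `‖ω(u · u*) − ω(q · q)‖² ≤ 4 (ω(p) + ω(q) − ω(u) − ω(u*))`. -/
theorem state_polar_inequality_twosided
    {C : Type*} [NormedRing C] [StarRing C] [CStarRing C] [NormedAlgebra ℂ C]
    [CompleteSpace C] [StarModule ℂ C]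
    (ω : C →L[ℂ] ℂ) (hω1 : ω 1 = 1) (hωpos : ∀ x : C, 0 ≤ ω (star x * x))
    (u : C) (hu : u * star u * u = u) :
    ‖ω.comp (ContinuousLinearMap.mulLeftRight ℂ C u (star u))
        - ω.comp (ContinuousLinearMap.mulLeftRight ℂ C (star u * u) (star u * u))‖ ^ 2
      ≤ 4 * (ω (u * star u) + ω (star u * u) - ω u - ω (star u)).re := by
  letI : CStarAlgebra C := { }
  letI : PartialOrder C := CStarAlgebra.spectralOrder C
  haveI : StarOrderedRing C := CStarAlgebra.spectralOrderedRing C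
  obtain ⟨q, hq⟩ : ∃ q : C, star u * u = q := ⟨_, rfl⟩
  obtain ⟨p, hp⟩ : ∃ p : C, u * star u = p := ⟨_, rfl⟩
  rw [hq, hp]
  have hqstar : star q = q := by rw [← hq]; simp [star_mul]
  have hpstar : star p = p := by rw [← hp]; simp [star_mul]
  have huq : u * q = u := by rw [← hq, ← mul_assoc, hu]
  have hqu : q * star u = star u := by
    rw [← hq, mul_assoc]
    calc star u * (u * star u) = star (u * star u * u) := by simp [star_mul, mul_assoc]
      _ = star u := by rw [hu]
  have hqq : q * q = q := by
    conv_lhs => rw [← hq, mul_assoc]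
    rw [← mul_assoc u, hu, hq]
  have hpp : p * p = p := by
    conv_lhs => rw [← hp, mul_assoc, ← mul_assoc (star u), hq, hqu]
    rw [hp]
  -- delta
  have hstar_sub : star (u - q) = star u - q := by rw [star_sub, hqstar]
  have hexp : (u - q) * star (u - q) = p + q - u - star u := by
    rw [hstar_sub, sub_mul, mul_sub, mul_sub, huq, hqu, hqq, hp]
    abel
  have hdc : (0:ℂ) ≤ ω ((u - q) * star (u - q)) := by
    simpa [star_star] using hωpos (star (u - q))
  set δ : ℝ := (ω ((u - q) * star (u - q))).re with hδ
  have hd0 : 0 ≤ δ := (Complex.nonneg_iff.mp hdc).1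
  have hdeq : δ = (ω p + ω q - ω u - ω (star u)).re := by
    rw [hδ, hexp]; simp [map_add, map_sub]
  -- projections bounded by 1
  have hmono1 : ∀ e : C, star e = e → e * e = e → (ω e).re ≤ 1 := by
    intro e hes hee
    have h1e : star (1 - e) * (1 - e) = 1 - e := by
      rw [star_sub, star_one, hes, mul_sub, sub_mul, sub_mul, hee]
      simp only [one_mul, mul_one]; abel
    have h0 : (0:C) ≤ 1 - e := h1e ▸ star_mul_self_nonneg _
    have := aux_mono ω hωpos (sub_nonneg.mp h0)
    simpa [hω1] using this
  have hp1 : (ω p).re ≤ 1 := hmono1 p hpstar hpp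
  have hq1 : (ω q).re ≤ 1 := hmono1 q hqstar hqq
  -- conjugation bound
  have hconj : ∀ (x c : C), (ω (c * (star x * x) * star c)).re ≤ ‖x‖^2 * (ω (c * star c)).re := by
    intro x c
    have hxx : star x * x ≤ algebraMap ℝ C (‖x‖^2) := by
      have := IsSelfAdjoint.le_algebraMap_norm_self (IsSelfAdjoint.star_mul_self x)
      rwa [CStarRing.norm_star_mul_self, ← sq] at this
    have h3 := aux_mono ω hωpos (star_right_conjugate_le_conjugate hxx c)
    calc (ω (c * (star x * x) * star c)).re ≤ (ω (c * algebraMap ℝ C (‖x‖^2) * star c)).re := h3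
      _ = ‖x‖^2 * (ω (c * star c)).re := by
          rw [Algebra.algebraMap_eq_smul_one, mul_smul_comm, mul_one, smul_mul_assoc,
            ω.map_smul_of_tower, Complex.real_smul, Complex.mul_re]
          simp [← Complex.ofReal_pow]
  -- pointwise bound
  have key : ∀ x : C,
      ‖(ω.comp (ContinuousLinearMap.mulLeftRight ℂ C u (star u))
        - ω.comp (ContinuousLinearMap.mulLeftRight ℂ C q q)) x‖ ≤ 2 * Real.sqrt δ * ‖x‖ := by
    intro x
    have happ : (ω.comp (ContinuousLinearMap.mulLeftRight ℂ C u (star u))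
        - ω.comp (ContinuousLinearMap.mulLeftRight ℂ C q q)) x
        = ω ((u - q) * (x * star u)) + ω ((q * x) * (star u - q)) := by
      simp only [ContinuousLinearMap.sub_apply, ContinuousLinearMap.comp_apply,
        ContinuousLinearMap.mulLeftRight_apply]
      rw [← map_sub, ← map_add]
      congr 1
      noncomm_ring
    have ht1 : ‖ω ((u - q) * (x * star u))‖ ≤ Real.sqrt δ * ‖x‖ := by
      have hcs := aux_cs ω hωpos (star (u - q)) (x * star u)
      rw [star_star] at hcs
      have hb : (ω (star (x * star u) * (x * star u))).re ≤ ‖x‖^2 * (ω p).re := by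
        have he : star (x * star u) * (x * star u) = u * (star x * x) * star u := by
          rw [star_mul, star_star]; noncomm_ring
        have h := hconj x u
        rw [hp] at h
        rw [he]
        exact h
      have hsq : ‖ω ((u - q) * (x * star u))‖^2 ≤ δ * ‖x‖^2 := by
        refine hcs.trans ?_
        have : (ω (star (x * star u) * (x * star u))).re ≤ ‖x‖^2 := by
          nlinarith [sq_nonneg ‖x‖]
        nlinarith [sq_nonneg ‖x‖]
      calc ‖ω ((u - q) * (x * star u))‖
          = Real.sqrt (‖ω ((u - q) * (x * star u))‖^2) := (Real.sqrt_sq (norm_nonneg _)).symm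
        _ ≤ Real.sqrt (δ * ‖x‖^2) := Real.sqrt_le_sqrt hsq
        _ = Real.sqrt δ * ‖x‖ := by rw [Real.sqrt_mul hd0, Real.sqrt_sq (norm_nonneg x)]
    have ht2 : ‖ω ((q * x) * (star u - q))‖ ≤ Real.sqrt δ * ‖x‖ := by
      have hcs := aux_cs ω hωpos (star (q * x)) (star u - q)
      rw [star_star] at hcs
      have he2 : star (star u - q) * (star u - q) = (u - q) * star (u - q) := by
        rw [star_sub, star_star, hqstar, ← hstar_sub]
      rw [he2] at hcs
      have hb : (ω ((q * x) * star (q * x))).re ≤ ‖x‖^2 * (ω q).re := by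
        have he : (q * x) * star (q * x) = q * (star (star x) * star x) * star q := by
          simp only [star_mul, star_star, hqstar]; noncomm_ring
        rw [he]
        simpa [hqstar, hqq] using hconj (star x) q
      have hsq : ‖ω ((q * x) * (star u - q))‖^2 ≤ ‖x‖^2 * δ := by
        refine hcs.trans ?_
        have : (ω ((q * x) * star (q * x))).re ≤ ‖x‖^2 := by
          nlinarith [sq_nonneg ‖x‖]
        have h0 : 0 ≤ (ω ((q * x) * star (q * x))).re := by
          have := hωpos (star (q * x))
          rw [star_star] at this
          exact (Complex.nonneg_iff.mp this).1
        nlinarith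
      calc ‖ω ((q * x) * (star u - q))‖
          = Real.sqrt (‖ω ((q * x) * (star u - q))‖^2) := (Real.sqrt_sq (norm_nonneg _)).symm
        _ ≤ Real.sqrt (‖x‖^2 * δ) := Real.sqrt_le_sqrt hsq
        _ = Real.sqrt δ * ‖x‖ := by
            rw [Real.sqrt_mul (sq_nonneg _), Real.sqrt_sq (norm_nonneg x), mul_comm]
    calc ‖(ω.comp (ContinuousLinearMap.mulLeftRight ℂ C u (star u))
        - ω.comp (ContinuousLinearMap.mulLeftRight ℂ C q q)) x‖
        = ‖ω ((u - q) * (x * star u)) + ω ((q * x) * (star u - q))‖ := by rw [happ]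
      _ ≤ ‖ω ((u - q) * (x * star u))‖ + ‖ω ((q * x) * (star u - q))‖ := norm_add_le _ _
      _ ≤ 2 * Real.sqrt δ * ‖x‖ := by linarith
  have hop : ‖ω.comp (ContinuousLinearMap.mulLeftRight ℂ C u (star u))
      - ω.comp (ContinuousLinearMap.mulLeftRight ℂ C q q)‖ ≤ 2 * Real.sqrt δ :=
    ContinuousLinearMap.opNorm_le_bound _ (by positivity) key
  have hfin : ‖ω.comp (ContinuousLinearMap.mulLeftRight ℂ C u (star u))
      - ω.comp (ContinuousLinearMap.mulLeftRight ℂ C q q)‖^2 ≤ (2 * Real.sqrt δ)^2 :=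
    pow_le_pow_left₀ (norm_nonneg _) hop 2
  have h4 : (2 * Real.sqrt δ)^2 = 4 * δ := by
    rw [mul_pow, Real.sq_sqrt hd0]; ring
  rw [← hdeq]
  linarith
end

section
/- Let A be a C*-algebra and μ a bounded linear functional on A with polar decomposition μ = |μ|(· u) for a partial isometry u in the bidual A** (so |μ| is a positive functional with ‖|μ|‖ = ‖μ‖). Suppose (μ_n) is a sequence (or net) of such functionals with ‖μ_n‖ → 1 and μ_n(p_n) → 1 where p_n := u_n u_n* is the range projection of the polar partial isometry of μ_n. Then ‖μ_n − |μ_n|‖ → 0. -/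
open scoped ComplexOrder
open Filter Topology

section aux

variable {A : Type*} [NormedRing A] [StarRing A] [CStarRing A] [NormedAlgebra ℂ A]
  [StarModule ℂ A]

/-- A positive functional is hermitian on products. -/
lemma pos_herm (ν : A →L[ℂ] ℂ) (hpos : ∀ x : A, 0 ≤ ν (star x * x)) (y z : A) :
    ν (star z * y) = (starRingEnd ℂ) (ν (star y * z)) := by
  have him : ∀ x : A, (ν (star x * x)).im = 0 := fun x => by
    simpa using (Complex.le_def.1 (hpos x)).2.symm
  set s := ν (star y * z) with hs
  set t := ν (star z * y) with ht
  have e1 : ν (star (y + z) * (y + z)) =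
      ν (star y * y) + s + t + ν (star z * z) := by
    rw [star_add, add_mul, mul_add, mul_add, map_add, map_add, map_add]; ring
  have h1 : s.im + t.im = 0 := by
    have := him (y + z)
    rw [e1] at this
    simp only [Complex.add_im, him y, him z] at this
    linarith
  have e2 : ν (star (y + Complex.I • z) * (y + Complex.I • z)) =
      ν (star y * y) + Complex.I * s + (-Complex.I) * t + ν (star z * z) := by
    rw [star_add, star_smul, add_mul, mul_add, mul_add, map_add, map_add, map_add]
    simp only [mul_smul_comm, smul_mul_assoc, smul_smul, map_smul, smul_eq_mul,
      Complex.star_def, Complex.conj_I, neg_mul, Complex.I_mul_I, neg_neg, one_mul]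
    linear_combination (-(ν (star z * z))) * Complex.I_sq
  have h2 : s.re - t.re = 0 := by
    have := him (y + Complex.I • z)
    rw [e2] at this
    simp only [Complex.add_im, Complex.mul_im, Complex.neg_re, Complex.neg_im,
      Complex.I_re, Complex.I_im, him y, him z] at this
    linarith
  apply Complex.ext
  · simpa [Complex.conj_re] using (by linarith : t.re = s.re)
  · simpa [Complex.conj_im] using (by linarith : t.im = -s.im)

/-- Cauchy–Schwarz for positive functionals. -/
lemma pos_cs (ν : A →L[ℂ] ℂ) (hpos : ∀ x : A, 0 ≤ ν (star x * x)) (y z : A) :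
    ‖ν (star y * z)‖ ^ 2 ≤ (ν (star y * y)).re * (ν (star z * z)).re := by
  have hre : ∀ x : A, 0 ≤ (ν (star x * x)).re := fun x => by
    simpa using (Complex.le_def.1 (hpos x)).1
  have him : ∀ x : A, (ν (star x * x)).im = 0 := fun x => by
    simpa using (Complex.le_def.1 (hpos x)).2.symm
  set s := ν (star y * z) with hs
  set c : ℂ := if h : s = 0 then 1 else -(starRingEnd ℂ) s / (‖s‖ : ℂ) with hc
  have hcs : c * s = -(‖s‖ : ℂ) := by
    rcases eq_or_ne s 0 with h | h
    · simp [hc, h]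
    · have habs : (‖s‖ : ℂ) ≠ 0 := by
        simpa using (norm_ne_zero_iff.mpr h)
      rw [hc, dif_neg h]
      field_simp
      rw [mul_comm _ s, Complex.mul_conj, Complex.normSq_eq_norm_sq]
      push_cast
      ring
  have hcc : (starRingEnd ℂ) c * c = 1 := by
    rcases eq_or_ne s 0 with h | h
    · simp [hc, h]
    · have habs : (‖s‖ : ℂ) ≠ 0 := by
        simpa using (norm_ne_zero_iff.mpr h)
      rw [hc, dif_neg h]
      rw [map_div₀, map_neg, Complex.conj_conj, Complex.conj_ofReal]
      field_simp
      rw [mul_comm _ ((starRingEnd ℂ) s), mul_comm _ s, Complex.mul_conj,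
        Complex.normSq_eq_norm_sq]
      push_cast; ring
  have hcs' : (starRingEnd ℂ) c * (starRingEnd ℂ) s = -(‖s‖ : ℂ) := by
    rw [← map_mul, hcs]
    simp [Complex.conj_ofReal]
  have key : ∀ r : ℝ, 0 ≤ (ν (star y * y)).re * (r * r) +
      (-(2 * ‖s‖)) * r + (ν (star z * z)).re := by
    intro r
    have expand : ν (star ((r : ℂ) • y + c • z) * ((r : ℂ) • y + c • z)) =
        ((r : ℂ) * r) * ν (star y * y) + (r : ℂ) * (c * s) +
          (r : ℂ) * ((starRingEnd ℂ) c * (starRingEnd ℂ) s) +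
          ((starRingEnd ℂ) c * c) * ν (star z * z) := by
      rw [star_add, star_smul, star_smul, add_mul, mul_add, mul_add,
        map_add, map_add, map_add]
      simp only [mul_smul_comm, smul_mul_assoc, smul_smul, map_smul, smul_eq_mul,
        Complex.star_def, Complex.conj_ofReal]
      rw [pos_herm ν hpos y z, ← hs]
      ring
    have h0 := hre ((r : ℂ) • y + c • z)
    rw [expand, hcs, hcs', hcc] at h0
    simp only [Complex.add_re, Complex.mul_re, Complex.ofReal_re, Complex.ofReal_im,
      Complex.one_re, Complex.one_im, Complex.neg_re, Complex.neg_im,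
      Complex.ofReal_mul, him y, him z, mul_zero, zero_mul, sub_zero] at h0
    nlinarith [h0]
  have hd := discrim_le_zero key
  rw [discrim] at hd
  have := norm_nonneg s
  nlinarith [hd]

end aux

/-- Let `μ_n` be bounded functionals on a C*-algebra (playing the role of the enveloping
von Neumann algebra `A**`) with polar decompositions `μ_n = |μ_n|(· u_n)`,
`|μ_n| = μ_n(· u_n*)`, where `u_n` are partial isometries and `|μ_n| = ν_n` are positive
with `‖ν_n‖ = ‖μ_n‖`. If `‖μ_n‖ → 1` and `μ_n(p_n) → 1` where `p_n = u_n u_n*`, then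
`‖μ_n − |μ_n|‖ → 0`. -/
theorem polar_decomposition_absolute_value_limit
    {A : Type*} [NormedRing A] [StarRing A] [CStarRing A] [NormedAlgebra ℂ A]
    [CompleteSpace A] [StarModule ℂ A]
    (μ ν : ℕ → (A →L[ℂ] ℂ)) (u : ℕ → A)
    (hu : ∀ n, u n * star (u n) * u n = u n)
    (hνpos : ∀ n (x : A), 0 ≤ ν n (star x * x))
    (hnorm : ∀ n, ‖ν n‖ = ‖μ n‖)
    (hpolar : ∀ n (x : A), μ n x = ν n (x * u n))
    (hpolar' : ∀ n (x : A), ν n x = μ n (x * star (u n)))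
    (hμ1 : Tendsto (fun n => ‖μ n‖) atTop (nhds 1))
    (hp : Tendsto (fun n => μ n (u n * star (u n))) atTop (nhds 1)) :
    Tendsto (fun n => ‖μ n - ν n‖) atTop (nhds 0) := by
  -- the defect `E n = ν n ((u n - 1)⋆ (u n - 1)).re`
  set E : ℕ → ℝ := fun n => (ν n (star (u n - 1) * (u n - 1))).re with hEdef
  have hE0 : ∀ n, 0 ≤ E n := fun n => by
    have h := (Complex.le_def.1 (hνpos n (u n - 1))).1
    simp only [Complex.zero_re] at h
    exact h
  -- norms of the partial isometries
  have hun : ∀ n, ‖u n‖ ≤ 1 := by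
    intro n
    have hq2 : star (u n) * u n * (star (u n) * u n) = star (u n) * u n := by
      rw [mul_assoc, ← mul_assoc (u n), hu n]
    have hqs : star (star (u n) * u n) = star (u n) * u n := by
      simp [star_mul]
    have h1 : ‖star (u n) * u n‖ * ‖star (u n) * u n‖ = ‖star (u n) * u n‖ := by
      conv_lhs => rw [← CStarRing.norm_star_mul_self (x := star (u n) * u n)]
      rw [hqs, hq2]
    have h2 : ‖star (u n) * u n‖ = ‖u n‖ * ‖u n‖ := CStarRing.norm_star_mul_self
    have h3 : ‖u n‖ * ‖u n‖ * (‖u n‖ * ‖u n‖) = ‖u n‖ * ‖u n‖ := by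
      rw [← h2, h1]
    by_contra hgt
    push_neg at hgt
    have ha2 : 1 < ‖u n‖ * ‖u n‖ := by nlinarith
    nlinarith [h3, ha2]
  -- values of ν n on various elements
  have hq : ∀ n, star (u n) * u n * star (u n) = star (u n) := by
    intro n
    have h := congrArg star (hu n)
    simpa [star_mul, star_star, mul_assoc] using h
  have hνq : ∀ n, ν n (star (u n) * u n) = μ n (star (u n)) := by
    intro n; rw [hpolar' n, hq n]
  have hν1 : ∀ n, ν n 1 = μ n (star (u n)) := by
    intro n; rw [hpolar' n, one_mul]
  have hνu : ∀ n, ν n (u n) = μ n (u n * star (u n)) := fun n => hpolar' n (u n)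
  have hνustar : ∀ n, ν n (star (u n)) = (starRingEnd ℂ) (μ n (u n * star (u n))) := by
    intro n
    have h := pos_herm (ν n) (hνpos n) (u n) 1
    simp only [star_one, one_mul, mul_one] at h
    rw [← hνu n, h, Complex.conj_conj]
  -- explicit formula for E n
  have hE : ∀ n, E n = 2 * (μ n (star (u n))).re - 2 * (μ n (u n * star (u n))).re := by
    intro n
    have hexp : star (u n - 1) * (u n - 1)
        = star (u n) * u n - star (u n) - u n + 1 := by
      simp only [star_sub, star_one, sub_mul, mul_sub, one_mul, mul_one]
      noncomm_ring
    rw [hEdef]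
    simp only [hexp, map_add, map_sub, hνq n, hν1 n, hνu n, hνustar n]
    simp [Complex.add_re, Complex.sub_re, Complex.conj_re]
    ring
  -- squeeze E n → 0
  have hpre : Tendsto (fun n => (μ n (u n * star (u n))).re) atTop (nhds 1) := by
    have := (Complex.continuous_re.tendsto (1 : ℂ)).comp hp
    simpa [Function.comp_def] using this
  have hElt : ∀ n, E n ≤ 2 * ‖μ n‖ - 2 * (μ n (u n * star (u n))).re := by
    intro n
    have h1 : (μ n (star (u n))).re ≤ ‖μ n‖ := by
      have h2 : (μ n (star (u n))).re ≤ ‖μ n (star (u n))‖ :=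
        Complex.re_le_norm _
      have h3 : ‖μ n (star (u n))‖ ≤ ‖μ n‖ * ‖star (u n)‖ := (μ n).le_opNorm _
      have h4 : ‖star (u n)‖ ≤ 1 := by rw [norm_star]; exact hun n
      have h5 : (0:ℝ) ≤ ‖μ n‖ := norm_nonneg _
      nlinarith
    rw [hE n]; linarith
  have hEtend : Tendsto E atTop (nhds 0) := by
    have hg : Tendsto (fun n => 2 * ‖μ n‖ - 2 * (μ n (u n * star (u n))).re)
        atTop (nhds 0) := by
      have := ((hμ1.const_mul 2).sub (hpre.const_mul 2))
      simpa using this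
    exact tendsto_of_tendsto_of_tendsto_of_le_of_le tendsto_const_nhds hg hE0 hElt
  -- the key norm bound
  have hbd : ∀ n, ‖μ n - ν n‖ ≤ Real.sqrt (‖μ n‖ * E n) := by
    intro n
    apply ContinuousLinearMap.opNorm_le_bound _ (Real.sqrt_nonneg _)
    intro x
    have hval : (μ n - ν n) x = ν n (x * (u n - 1)) := by
      rw [ContinuousLinearMap.sub_apply, hpolar n x, ← map_sub, mul_sub, mul_one]
    have hcs := pos_cs (ν n) (hνpos n) (star x) (u n - 1)
    rw [star_star] at hcs
    have hxx : (ν n (x * star x)).re ≤ ‖μ n‖ * (‖x‖ * ‖x‖) := by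
      have h2 : (ν n (x * star x)).re ≤ ‖ν n (x * star x)‖ :=
        Complex.re_le_norm _
      have h3 : ‖ν n (x * star x)‖ ≤ ‖ν n‖ * ‖x * star x‖ := (ν n).le_opNorm _
      rw [CStarRing.norm_self_mul_star, hnorm n] at h3
      linarith
    have hsq : ‖(μ n - ν n) x‖ ^ 2 ≤ (‖μ n‖ * E n) * ‖x‖ ^ 2 := by
      rw [hval]
      calc ‖ν n (x * (u n - 1))‖ ^ 2
          ≤ (ν n (x * star x)).re * E n := hcs
        _ ≤ (‖μ n‖ * E n) * ‖x‖ ^ 2 := by nlinarith [hE0 n, norm_nonneg x, norm_nonneg (μ n), hxx]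
    calc ‖(μ n - ν n) x‖ = Real.sqrt (‖(μ n - ν n) x‖ ^ 2) :=
          (Real.sqrt_sq (norm_nonneg _)).symm
      _ ≤ Real.sqrt ((‖μ n‖ * E n) * ‖x‖ ^ 2) := Real.sqrt_le_sqrt hsq
      _ = Real.sqrt (‖μ n‖ * E n) * ‖x‖ := by
          rw [Real.sqrt_mul (mul_nonneg (norm_nonneg _) (hE0 n)) (‖x‖ ^ 2)]
          rw [Real.sqrt_sq (norm_nonneg x)]
  -- conclude
  have hsqrt : Tendsto (fun n => Real.sqrt (‖μ n‖ * E n)) atTop (nhds 0) := by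
    have h : Tendsto (fun n => Real.sqrt (‖μ n‖ * E n)) atTop
        (nhds (Real.sqrt ((1:ℝ) * 0))) :=
      (Real.continuous_sqrt.tendsto ((1:ℝ) * 0)).comp (hμ1.mul hEtend)
    rw [mul_zero, Real.sqrt_zero] at h
    exact h
  exact tendsto_of_tendsto_of_tendsto_of_le_of_le tendsto_const_nhds hsqrt
    (fun n => norm_nonneg _) hbd
end
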